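/- Let E be a real inner product space and let V = (a, v) ∈ ℝ × E be a nonzero past-directed non-spacelike vector, i.e. a < 0 and ‖v‖ ≤ |a|. Suppose that g(V, W) ≥ √(−g(W,W)) for every future-directed causal vector W = (b, w) (b > 0, ‖w‖ ≤ b), where g((a,v),(b,w)) = −ab + ⟪v,w⟫. Then V is timelike and not lightlike: ‖v‖ < |a|, i.e. g(V,V) < 0. -/

import Mathlib

open scoped RealInnerProductSpace

/-- Let `V = (a, v) ∈ ℝ × E` be a nonzero past-directed non-spacelike vector
(`a < 0`, `‖v‖ ≤ |a|`) for the Minkowski form `g((a,v),(b,w)) = -ab + ⟪v,w⟫`.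
If `g(V, W) ≥ √(-g(W,W))` for every future-directed causal vector `W = (b, w)`
(`b > 0`, `‖w‖ ≤ b`), then `V` is timelike and not lightlike:
`‖v‖ < |a|`, i.e. `g(V,V) = -a² + ‖v‖² < 0`. -/
theorem past_nonspacelike_is_timelike
    {E : Type*} [NormedAddCommGroup E] [InnerProductSpace ℝ E]
    (a : ℝ) (v : E) (ha : a < 0) (hav : ‖v‖ ≤ |a|)
    (h : ∀ (b : ℝ) (w : E), 0 < b → ‖w‖ ≤ b →
      Real.sqrt (-(-(b * b) + ⟪w, w⟫)) ≤ -(a * b) + ⟪v, w⟫) :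
    ‖v‖ < |a| ∧ -(a * a) + ⟪v, v⟫ < 0 := by
  have habs : |a| = -a := abs_of_neg ha
  have hv : ‖v‖ < |a| := by
    by_contra hlt
    have heq : ‖v‖ = |a| := le_antisymm hav (not_lt.mp hlt)
    set c : ℝ := ‖v‖ with hc
    have hcpos : 0 < c := by rw [heq]; exact abs_pos.mpr ha.ne
    have hca : c = -a := heq.trans habs
    set ε : ℝ := min 1 (1 / (c * c)) with hε
    have hεpos : 0 < ε := lt_min one_pos (by positivity)
    have hε1 : ε ≤ 1 := min_le_left _ _
    have hεc : c * c * ε ≤ 1 := by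
      have := min_le_right 1 (1 / (c * c))
      calc c * c * ε ≤ c * c * (1 / (c * c)) := by
            apply mul_le_mul_of_nonneg_left this (by positivity)
        _ = 1 := by field_simp
    set w : E := (-(1 / c)) • v with hw
    have hnw : ‖w‖ = 1 := by
      rw [hw, norm_smul, norm_neg, norm_div, norm_one, Real.norm_eq_abs,
        abs_of_pos hcpos]
      field_simp
      exact hc.symm
    have hww : ⟪w, w⟫ = 1 := by
      rw [real_inner_self_eq_norm_sq, hnw]; norm_num
    have hvw : ⟪v, w⟫ = -c := by
      rw [hw, real_inner_smul_right, real_inner_self_eq_norm_sq, ← hc]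
      field_simp
    have key := h (1 + ε) w (by linarith) (by rw [hnw]; linarith)
    rw [hww, hvw] at key
    have harg : -(-((1 + ε) * (1 + ε)) + 1) = 2 * ε + ε * ε := by ring
    rw [harg] at key
    have hrhs : -(a * (1 + ε)) + -c = c * ε := by rw [hca]; ring
    rw [hrhs] at key
    have hnn : (0:ℝ) ≤ 2 * ε + ε * ε := by positivity
    have hsq : 2 * ε + ε * ε ≤ (c * ε) ^ 2 := by
      have := Real.sq_sqrt hnn
      nlinarith [Real.sqrt_nonneg (2 * ε + ε * ε)]
    nlinarith
  refine ⟨hv, ?_⟩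
  have := real_inner_self_eq_norm_sq v
  nlinarith [abs_nonneg a, sq_abs a, mul_self_lt_mul_self (norm_nonneg v) hv]
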